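/- arXiv:2202.03350 — 3 statements merged into one kernel-verified Lean document; each statement's English description precedes it below -/
import Mathlib

section
/- Let m be a node minimizing the weighted sum of Manhattan distances to a finite multiset of robot positions on the grid ℤ×ℤ. If one robot moves from node a to an adjacent node b lying on a shortest path from a to m (i.e., d(b,m) = d(a,m) - 1), then m still minimizes the weighted sum of distances in the new configuration. -/
/-- Manhattan distance on the grid ℤ × ℤ. -/
def mdist (a b : ℤ × ℤ) : ℕ := (a.1 - b.1).natAbs + (a.2 - b.2).natAbs

/-- Consistency of a node `m`: weighted sum of Manhattan distances to the robots. -/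
noncomputable def consistency (lam : (ℤ × ℤ) →₀ ℕ) (m : ℤ × ℤ) : ℕ :=
  lam.sum fun v k => mdist v m * k

lemma consistency_add (μ ν : (ℤ × ℤ) →₀ ℕ) (x : ℤ × ℤ) :
    consistency (μ + ν) x = consistency μ x + consistency ν x := by
  unfold consistency
  rw [Finsupp.sum_add_index]
  · intro v _; simp
  · intro v _ k1 k2; ring

lemma consistency_single (a x : ℤ × ℤ) :
    consistency (Finsupp.single a 1) x = mdist a x := by
  unfold consistency
  rw [Finsupp.sum_single_index] <;> simp

lemma mdist_tri (a b c : ℤ × ℤ) : mdist a c ≤ mdist a b + mdist b c := by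
  unfold mdist
  have h1 : (a.1 - c.1).natAbs ≤ (a.1 - b.1).natAbs + (b.1 - c.1).natAbs := by
    have := Int.natAbs_add_le (a.1 - b.1) (b.1 - c.1)
    simpa [sub_add_sub_cancel] using this
  have h2 : (a.2 - c.2).natAbs ≤ (a.2 - b.2).natAbs + (b.2 - c.2).natAbs := by
    have := Int.natAbs_add_le (a.2 - b.2) (b.2 - c.2)
    simpa [sub_add_sub_cancel] using this
  omega

theorem stmt_0 (lam : (ℤ × ℤ) →₀ ℕ) (M : Finset (ℤ × ℤ)) (hM : M.Nonempty)
    (m a b : ℤ × ℤ) (hm : m ∈ M)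
    (hmin : ∀ m' ∈ M, consistency lam m ≤ consistency lam m')
    (ha : 1 ≤ lam a) (hab : mdist a b = 1) (hb : mdist b m + 1 = mdist a m) :
    ∀ m' ∈ M,
      consistency (lam + Finsupp.single b 1 - Finsupp.single a 1) m
        ≤ consistency (lam + Finsupp.single b 1 - Finsupp.single a 1) m' := by
  intro m' hm'
  set μ := lam + Finsupp.single b 1 - Finsupp.single a 1 with hμ
  have hle : Finsupp.single a 1 ≤ lam + Finsupp.single b 1 := by
    intro v
    by_cases hv : v = a
    · subst hv; simp only [Finsupp.single_eq_same, Finsupp.add_apply]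
      exact le_trans ha (Nat.le_add_right _ _)
    · simp [Finsupp.single_eq_of_ne' (fun h => hv h.symm)]
  have hkey : μ + Finsupp.single a 1 = lam + Finsupp.single b 1 :=
    tsub_add_cancel_of_le hle
  have key : ∀ x, consistency μ x + mdist a x = consistency lam x + mdist b x := by
    intro x
    have := congrArg (fun ν => consistency ν x) hkey
    simpa [consistency_add, consistency_single] using this
  have km := key m
  have km' := key m'
  have htri : mdist a m' ≤ mdist a b + mdist b m' := mdist_tri a b m'
  have hmin' := hmin m' hm'
  omega
end

section
/- Suppose a configuration on ℤ×ℤ is invariant under rotation by 180° about a center point c (i.e., both the robot-count function λ and the meeting-node set M are preserved by the map v ↦ 2c - v), and c is itself a meeting node. Then c is a Weber node: c minimizes the consistency c(m) = Σ_v d(v,m)·λ(v) over all meeting nodes m ∈ M. -/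
/-- Rotation by 180° about the node `c`. -/
def rot180 (c v : ℤ × ℤ) : ℤ × ℤ := (2 * c.1 - v.1, 2 * c.2 - v.2)

theorem stmt_5 (lam : (ℤ × ℤ) →₀ ℕ) (M : Finset (ℤ × ℤ)) (c : ℤ × ℤ)
    (hsym : ∀ v, lam (rot180 c v) = lam v)
    (hMsym : ∀ m ∈ M, rot180 c m ∈ M)
    (hc : c ∈ M) :
    ∀ m ∈ M, consistency lam c ≤ consistency lam m := by
  intro m _
  have hinv : ∀ v, rot180 c (rot180 c v) = v := by
    intro v
    simp only [rot180, Prod.ext_iff]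
    omega
  have hmem : ∀ v ∈ lam.support, rot180 c v ∈ lam.support := by
    intro v hv
    simp only [Finsupp.mem_support_iff] at *
    rw [hsym]; exact hv
  -- sum invariance under rotation
  have hsum : ∀ f : ℤ × ℤ → ℕ,
      (∑ v ∈ lam.support, f (rot180 c v) * lam v)
        = ∑ v ∈ lam.support, f v * lam v := by
    intro f
    refine Finset.sum_nbij' (i := rot180 c) (j := rot180 c) hmem hmem
      (fun v _ => hinv v) (fun v _ => hinv v) ?_
    intro v hv
    rw [hsym]
  have htri : ∀ v, 2 * mdist v c ≤ mdist v m + mdist (rot180 c v) m := by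
    intro v
    simp only [mdist, rot180]
    omega
  have h2 : 2 * consistency lam c ≤ 2 * consistency lam m := by
    unfold consistency Finsupp.sum
    calc 2 * ∑ v ∈ lam.support, mdist v c * lam v
        = ∑ v ∈ lam.support, (2 * mdist v c) * lam v := by
          rw [Finset.mul_sum]; apply Finset.sum_congr rfl; intro v _; ring
      _ ≤ ∑ v ∈ lam.support, (mdist v m + mdist (rot180 c v) m) * lam v := by
          apply Finset.sum_le_sum
          intro v _
          exact Nat.mul_le_mul_right _ (htri v)
      _ = (∑ v ∈ lam.support, mdist v m * lam v)
            + ∑ v ∈ lam.support, mdist (rot180 c v) m * lam v := by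
          rw [← Finset.sum_add_distrib]
          apply Finset.sum_congr rfl; intro v _; ring
      _ = 2 * ∑ v ∈ lam.support, mdist v m * lam v := by
          rw [hsum (fun v => mdist v m)]; ring
  omega
end

section
/- Let c be a point such that the robot configuration λ on ℤ×ℤ is invariant under the 180° rotation ρ(v) = 2c - v. Then for every node m, the consistency satisfies c(m) ≥ c(c), i.e., c globally minimizes the sum of weighted Manhattan distances over all nodes (not just meeting nodes). -/
lemma rot180_invol (c v : ℤ × ℤ) : rot180 c (rot180 c v) = v := by
  simp [rot180]

lemma key_ineq (c v m : ℤ × ℤ) :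
    2 * mdist v c ≤ mdist v m + mdist (rot180 c v) m := by
  simp only [mdist, rot180]
  omega

theorem stmt_6 (lam : (ℤ × ℤ) →₀ ℕ) (c : ℤ × ℤ)
    (hsym : ∀ v, lam (rot180 c v) = lam v) :
    ∀ m : ℤ × ℤ, consistency lam c ≤ consistency lam m := by
  intro m
  have hmem : ∀ v : ℤ × ℤ, v ∈ lam.support → rot180 c v ∈ lam.support := by
    intro v hv
    simpa [Finsupp.mem_support_iff, hsym v] using hv
  have hre : ∑ v ∈ lam.support, mdist (rot180 c v) m * lam v
      = ∑ v ∈ lam.support, mdist v m * lam v := by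
    refine Finset.sum_nbij' (i := rot180 c) (j := rot180 c)
      (fun v hv => hmem v hv) (fun v hv => hmem v hv)
      (fun v _ => rot180_invol c v) (fun v _ => rot180_invol c v) ?_
    intro v hv
    rw [hsym v]
  have h2 : 2 * consistency lam c ≤ 2 * consistency lam m := by
    unfold consistency Finsupp.sum
    simp only []
    have h3 : ∑ i ∈ lam.support, 2 * (mdist i c * lam i)
        ≤ (∑ v ∈ lam.support, mdist (rot180 c v) m * lam v)
          + ∑ v ∈ lam.support, mdist v m * lam v := by
      rw [← Finset.sum_add_distrib]
      refine Finset.sum_le_sum fun v _ => ?_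
      calc 2 * (mdist v c * lam v) = (2 * mdist v c) * lam v := by ring
      _ ≤ (mdist (rot180 c v) m + mdist v m) * lam v := by
          have := key_ineq c v m; exact Nat.mul_le_mul_right _ (by omega)
      _ = mdist (rot180 c v) m * lam v + mdist v m * lam v := by ring
    rw [hre] at h3
    calc 2 * ∑ i ∈ lam.support, mdist i c * lam i
        = ∑ i ∈ lam.support, 2 * (mdist i c * lam i) := by rw [Finset.mul_sum]
      _ ≤ _ := h3
      _ = 2 * ∑ i ∈ lam.support, mdist i m * lam i := by ring
  omega
end
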